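/- Let E be a real inner product space, let n ≥ 2, and let a_1, …, a_n ∈ E, with ā = (1/n) ∑_{i=1}^n a_i and b = (1/(n−1)) ∑_{i=2}^n a_i. Define each player's utility under full participation as u_1 = ‖a_1 − ā‖² − max_{j ≥ 2} ‖a_j − ā‖², and player 1's utility upon withdrawing as û_1 = 0 − max_{j ≥ 2} ( ‖a_j − ā‖² − ‖b − ā‖² ). Then u_1 ≥ û_1; that is, for the average point mechanism that returns the average of the submitted points to every participant and nothing to nonparticipants, full participation is a dominant strategy for all-or-nothing players with value function v(y) = −‖y − ā‖². -/

import Mathlib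

/-- The finset of all players other than `i` is nonempty when there are at least two players. -/
lemma eraseNonempty {n : ℕ} (hn : 2 ≤ n) (i : Fin n) :
    (Finset.univ.erase i).Nonempty := by
  rw [← Finset.card_pos, Finset.card_erase_of_mem (Finset.mem_univ i), Finset.card_univ,
    Fintype.card_fin]
  omega

lemma sup'_sub_const {α : Type*} (s : Finset α) (h : s.Nonempty) (f : α → ℝ) (c : ℝ) :
    s.sup' h (fun x => f x - c) = s.sup' h f - c := by
  apply le_antisymm
  · apply Finset.sup'_le
    intro x hx
    have := Finset.le_sup' f hx
    linarith
  · rw [sub_le_iff_le_add]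
    apply Finset.sup'_le
    intro x hx
    have := Finset.le_sup' (fun x => f x - c) hx
    linarith

/-- Truthfulness of the average point mechanism for all-or-nothing players with value
function `v(y) = −‖y − ā‖²`: player 1's single-envy utility under full participation,
`u₁ = ‖a₁ − ā‖² − max_{j≠1} ‖a_j − ā‖²`, is at least her utility upon withdrawing,
`û₁ = 0 − max_{j≠1} (‖a_j − ā‖² − ‖b − ā‖²)`. -/
theorem average_point_truthful {E : Type*} [NormedAddCommGroup E] [InnerProductSpace ℝ E]
    {n : ℕ} (hn : 2 ≤ n) (a : Fin n → E) (abar b : E)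
    (habar : abar = (n : ℝ)⁻¹ • ∑ i, a i)
    (hb : b = ((n : ℝ) - 1)⁻¹ •
      ∑ i ∈ Finset.univ.erase (⟨0, by omega⟩ : Fin n), a i) :
    ‖a ⟨0, by omega⟩ - abar‖ ^ 2 -
        (Finset.univ.erase (⟨0, by omega⟩ : Fin n)).sup'
          (eraseNonempty hn _) (fun j => ‖a j - abar‖ ^ 2)
      ≥ 0 -
        (Finset.univ.erase (⟨0, by omega⟩ : Fin n)).sup'
          (eraseNonempty hn _) (fun j => ‖a j - abar‖ ^ 2 - ‖b - abar‖ ^ 2) := by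
  set i0 : Fin n := ⟨0, by omega⟩
  have hn0 : (n : ℝ) ≠ 0 := by positivity
  have hn1 : (n : ℝ) - 1 ≠ 0 := by
    have : (2 : ℝ) ≤ n := by exact_mod_cast hn
    linarith
  have hS : ∑ i, a i = (n : ℝ) • abar := by
    rw [habar, smul_smul, mul_inv_cancel₀ hn0, one_smul]
  have hE : ∑ i ∈ Finset.univ.erase i0, a i = (n : ℝ) • abar - a i0 := by
    rw [← hS]
    exact Finset.sum_erase_eq_sub (Finset.mem_univ i0)
  have hba : b - abar = ((n : ℝ) - 1)⁻¹ • (abar - a i0) := by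
    rw [hb, hE]
    match_scalars <;> field_simp <;> ring
  have hnorm : ‖b - abar‖ ≤ ‖a i0 - abar‖ := by
    rw [hba, norm_smul, norm_sub_rev]
    have h1 : (1 : ℝ) ≤ (n : ℝ) - 1 := by
      have : (2 : ℝ) ≤ n := by exact_mod_cast hn
      linarith
    have : ‖((n : ℝ) - 1)⁻¹‖ ≤ 1 := by
      rw [Real.norm_eq_abs, abs_of_nonneg (by positivity)]
      exact inv_le_one_of_one_le₀ h1
    calc ‖((n : ℝ) - 1)⁻¹‖ * ‖a i0 - abar‖ ≤ 1 * ‖a i0 - abar‖ := by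
          exact mul_le_mul_of_nonneg_right this (norm_nonneg _)
      _ = ‖a i0 - abar‖ := one_mul _
  have hsq : ‖b - abar‖ ^ 2 ≤ ‖a i0 - abar‖ ^ 2 :=
    pow_le_pow_left₀ (norm_nonneg _) hnorm 2
  rw [sup'_sub_const]
  set M := (Finset.univ.erase i0).sup' (eraseNonempty hn i0) (fun j => ‖a j - abar‖ ^ 2)
  linarith
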